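/- In the coupled-curve setting below, there exists a constant c_1 > 0, depending only on c' and the flows g_1, g_2 (in particular independent of n), such that for every n >= 0 and i = 1,2: the set S(psi_n^i) of points where psi_n^i fails to be C^1 is finite, and (psi_n^i)'(u) >= c_1 for every u in [0, e^{lambda n} a] outside S(psi_n^i). -/

import Mathlib

noncomputable section

open Real Set Filter Topology MeasureTheory
open scoped Classical

instance factOneLtZero : Fact ((0:ℝ) < 1) := ⟨zero_lt_one⟩

/-- The circle `𝕋 = ℝ/ℤ`. -/
abbrev Circ : Type := AddCircle (1 : ℝ)

/-- The projection `ℝ → 𝕋`. -/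
def coeT (x : ℝ) : Circ := (x : Circ)

/-- The representative of a point of `𝕋` in `[0,1)` (identification of `𝕋` with `[0,1)`). -/
def rep (z : Circ) : ℝ := (AddCircle.equivIco 1 0 z : ℝ)

/-- `f : ℝ → 𝕋` has derivative `d` at `u`, computed via a local lift. -/
def HasCircDerivAt (f : ℝ → Circ) (d : ℝ) (u : ℝ) : Prop :=
  ∃ F : ℝ → ℝ, (∀ᶠ v in nhds u, coeT (F v) = f v) ∧ HasDerivAt F d u

/-- `f : ℝ → 𝕋` is `C¹` on a neighborhood of `u` (via a local lift). -/
def IsC1At (f : ℝ → Circ) (u : ℝ) : Prop :=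
  ∃ (F : ℝ → ℝ) (ε : ℝ), 0 < ε ∧ (∀ v ∈ Ioo (u - ε) (u + ε), coeT (F v) = f v) ∧
    ContDiffOn ℝ 1 F (Ioo (u - ε) (u + ε))

/-- `f : ℝ → 𝕋` is continuous and monotonically increasing on a neighborhood of `u`,
i.e. admits a continuous nondecreasing local lift there. -/
def ContMonoNear (f : ℝ → Circ) (u : ℝ) : Prop :=
  ∃ (F : ℝ → ℝ) (ε : ℝ), 0 < ε ∧ (∀ v ∈ Ioo (u - ε) (u + ε), coeT (F v) = f v) ∧
    ContinuousOn F (Ioo (u - ε) (u + ε)) ∧ MonotoneOn F (Ioo (u - ε) (u + ε))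

/-- `f : ℝ → 𝕋` is `C¹` on a neighborhood of `u`, except possibly at `u` itself. -/
def C1StarNear (f : ℝ → Circ) (u : ℝ) : Prop :=
  ∃ ε : ℝ, 0 < ε ∧ ∀ v ∈ Ioo (u - ε) (u + ε), v ≠ u → IsC1At f v

/-- The number of the coordinates of `z = (z₁, z₂) ∈ 𝕋²` lying in the arc `(1/2, 1)`. -/
def cnt (z : Circ × Circ) : ℕ :=
  (if 1/2 < rep z.1 then 1 else 0) + (if 1/2 < rep z.2 then 1 else 0)

namespace Aux

lemma int_eq_zero_of_abs_lt {k : ℤ} (h : |(k:ℝ)| < 1) : k = 0 := by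
  by_contra hk
  have : (1:ℝ) ≤ |(k:ℝ)| := by
    have : (1:ℤ) ≤ |k| := Int.one_le_abs (by omega)
    calc (1:ℝ) = ((1:ℤ):ℝ) := by norm_num
    _ ≤ ((|k|:ℤ):ℝ) := by exact_mod_cast this
    _ = |(k:ℝ)| := by push_cast; ring
  linarith

lemma sub_int_of_coe_eq {x y : ℝ} (h : (x : Circ) = (y : Circ)) : ∃ k : ℤ, y - x = k := by
  have := (QuotientAddGroup.eq_iff_sub_mem).mp h.symm
  rw [AddSubgroup.mem_zmultiples_iff] at this
  obtain ⟨k, hk⟩ := this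
  exact ⟨k, by simpa using hk.symm⟩

lemma coe_add_int (x : ℝ) (k : ℤ) : ((x + k : ℝ) : Circ) = (x : Circ) := by
  simp [AddCircle.coe_add]

lemma rep_coe (x : ℝ) : rep ((x : ℝ) : Circ) = Int.fract x := by
  unfold rep
  have := AddCircle.coe_equivIco_mk_apply (1:ℝ) x
  simpa using this

/-- Integer-valued continuous functions on ord-connected sets are constant. -/
lemma int_valued_const {f : ℝ → ℝ} {s : Set ℝ} (hs : s.OrdConnected)
    (hc : ContinuousOn f s) (hi : ∀ v ∈ s, ∃ k : ℤ, f v = k)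
    {v w : ℝ} (hv : v ∈ s) (hw : w ∈ s) : f v = f w := by
  by_contra hne
  obtain ⟨k, hk⟩ := hi v hv
  obtain ⟨l, hl⟩ := hi w hw
  have hkl : k ≠ l := by rintro rfl; exact hne (hk.trans hl.symm)
  have hmem : ((min k l : ℤ) + 1/2 : ℝ) ∈ uIcc (f v) (f w) := by
    rw [mem_uIcc, hk, hl]
    rcases lt_or_gt_of_ne hkl with h | h
    · left
      have hmin : min k l = k := min_eq_left h.le
      have hcast : (k:ℝ) + 1 ≤ l := by exact_mod_cast (by omega : k + 1 ≤ l)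
      rw [hmin]
      constructor <;> linarith
    · right
      have hmin : min k l = l := min_eq_right h.le
      have hcast : (l:ℝ) + 1 ≤ k := by exact_mod_cast (by omega : l + 1 ≤ k)
      rw [hmin]
      constructor <;> linarith
  have hsub : uIcc v w ⊆ s := hs.uIcc_subset hv hw
  obtain ⟨ξ, hξ, hfξ⟩ := intermediate_value_uIcc (hc.mono hsub) hmem
  obtain ⟨m, hmv⟩ := hi ξ (hsub hξ)
  rw [hmv] at hfξ
  have : (2*m : ℤ) = 2 * (min k l) + 1 := by
    have h2 : (2:ℝ) * m = 2 * ((min k l : ℤ):ℝ) + 1 := by rw [hfξ]; ring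
    exact_mod_cast h2
  omega

/-- Gluing monotonicity across a point using continuity. -/
lemma monotoneOn_glue {f : ℝ → ℝ} {a b u : ℝ} (hau : a < u) (hub : u < b)
    (hc : ContinuousAt f u) (h1 : MonotoneOn f (Ioo a u)) (h2 : MonotoneOn f (Ioo u b)) :
    MonotoneOn f (Ioo a b) := by
  have hle1 : ∀ x ∈ Ioo a u, f x ≤ f u := by
    intro x hx
    have htd : Tendsto f (𝓝[<] u) (𝓝 (f u)) :=
      hc.continuousWithinAt.tendsto
    refine ge_of_tendsto htd ?_
    filter_upwards [Ioo_mem_nhdsLT_of_mem (show u ∈ Ioc x u from ⟨hx.2, le_rfl⟩)] with y hy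
    exact h1 hx ⟨hx.1.trans hy.1, hy.2⟩ hy.1.le
  have hle2 : ∀ y ∈ Ioo u b, f u ≤ f y := by
    intro y hy
    have htd : Tendsto f (𝓝[>] u) (𝓝 (f u)) := hc.continuousWithinAt.tendsto
    refine le_of_tendsto htd ?_
    filter_upwards [Ioo_mem_nhdsGT_of_mem (show u ∈ Ico u y from ⟨le_rfl, hy.1⟩)] with x hx
    exact h2 ⟨hx.1, hx.2.trans hy.2⟩ hy hx.2.le
  intro x hx y hy hxy
  rcases lt_trichotomy x u with h | h | h
  · rcases lt_trichotomy y u with h' | h' | h'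
    · exact h1 ⟨hx.1, h⟩ ⟨hy.1, h'⟩ hxy
    · exact h' ▸ hle1 x ⟨hx.1, h⟩
    · exact (hle1 x ⟨hx.1, h⟩).trans (hle2 y ⟨h', hy.2⟩)
  · subst h
    rcases eq_or_lt_of_le hxy with rfl | h'
    · exact le_rfl
    · exact hle2 y ⟨h', hy.2⟩
  · have : u < y := h.trans_le hxy
    exact h2 ⟨h, hx.2⟩ ⟨this, hy.2⟩ hxy

lemma deriv_nonneg_of_monotoneOn {f : ℝ → ℝ} {u η d : ℝ} (hη : 0 < η)
    (hm : MonotoneOn f (Ioo (u-η) (u+η))) (hd : HasDerivAt f d u) : 0 ≤ d := by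
  have hts : Tendsto (slope f u) (𝓝[≠] u) (𝓝 d) := hasDerivAt_iff_tendsto_slope.mp hd
  have hts' : Tendsto (slope f u) (𝓝[>] u) (𝓝 d) :=
    hts.mono_left (nhdsWithin_mono u (fun x hx => ne_of_gt hx))
  refine ge_of_tendsto hts' ?_
  filter_upwards [Ioo_mem_nhdsGT_of_mem (show u ∈ Ico u (u+η) from ⟨le_rfl, by linarith⟩)]
    with v hv
  have hu : u ∈ Ioo (u-η) (u+η) := ⟨by linarith, by linarith⟩
  have hvm : v ∈ Ioo (u-η) (u+η) := ⟨by linarith [hv.1], hv.2⟩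
  have : f u ≤ f v := hm hu hvm hv.1.le
  have hpos : 0 < v - u := by linarith [hv.1]
  simp only [slope_def_field]
  rw [div_nonneg_iff]
  left; constructor <;> [linarith; linarith]

lemma finite_of_locally_finite {A : Set ℝ} {p q : ℝ}
    (h : ∀ u ∈ Icc p q, ∃ ε > 0, (A ∩ Ioo (u-ε) (u+ε)).Finite) :
    (A ∩ Icc p q).Finite := by
  rcases le_or_gt p q with hpq | hpq
  · choose! eps heps hfin using h
    have hcomp : IsCompact (Icc p q) := isCompact_Icc
    obtain ⟨t, ht⟩ := hcomp.elim_finite_subcover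
        (fun u : Icc p q => Ioo ((u:ℝ) - eps u) ((u:ℝ) + eps u))
        (fun u => isOpen_Ioo)
        (by
          intro x hx
          refine mem_iUnion.mpr ⟨⟨x, hx⟩, ?_⟩
          have := heps x hx
          exact ⟨by simpa using by linarith, by simpa using by linarith⟩)
    have : A ∩ Icc p q ⊆ ⋃ u ∈ t, (A ∩ Ioo ((u:ℝ) - eps u) ((u:ℝ) + eps u)) := by
      intro x hx
      obtain ⟨u, hu, hmem⟩ := mem_iUnion₂.mp (ht hx.2)
      exact mem_iUnion₂.mpr ⟨u, hu, ⟨hx.1, hmem⟩⟩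
    refine Set.Finite.subset (Set.Finite.biUnion t.finite_toSet ?_) this
    intro u hu
    exact hfin u u.2
  · rw [Icc_eq_empty (not_le.mpr hpq), inter_empty]
    exact finite_empty

lemma exists_Ioo_disjoint {D : Set ℝ} (hD : ∀ p q : ℝ, (D ∩ Icc p q).Finite) (u : ℝ) :
    ∃ ε > 0, ε ≤ 1 ∧ D ∩ Ioo (u-ε) (u+ε) ⊆ {u} := by
  set E := (D ∩ Icc (u-1) (u+1)) \ {u} with hE
  have hEfin : E.Finite := ((hD (u-1) (u+1)).diff)
  have hEclosed : IsClosed E := hEfin.isClosed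
  have huE : u ∈ Eᶜ := by simp [hE]
  obtain ⟨ε, hε, hball⟩ := Metric.isOpen_iff.mp hEclosed.isOpen_compl u huE
  refine ⟨min ε 1, by positivity, min_le_right _ _, ?_⟩
  intro v hv
  by_contra hvu
  simp only [mem_singleton_iff] at hvu
  have hvd : v ∈ D := hv.1
  have hvIoo : v ∈ Ioo (u - min ε 1) (u + min ε 1) := hv.2
  have h1 : |v - u| < min ε 1 := by
    rw [abs_lt]; constructor <;> [linarith [hvIoo.1]; linarith [hvIoo.2]]
  have hvE : v ∈ E := by
    refine ⟨⟨hvd, ?_⟩, hvu⟩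
    have := lt_of_lt_of_le h1 (min_le_right _ _)
    rw [abs_lt] at this
    exact ⟨by linarith [this.1], by linarith [this.2]⟩
  have : v ∈ Metric.ball u ε := by
    rw [Metric.mem_ball, Real.dist_eq]
    exact lt_of_lt_of_le h1 (min_le_left _ _)
  exact (hball this) hvE

lemma odd_floor_two_mul_iff {x : ℝ} (h : ∀ k : ℤ, 2*x ≠ k) :
    (1/2 < Int.fract x ↔ Odd ⌊2*x⌋) := by
  have hf0 : Int.fract x ≠ 0 := by
    intro h0
    apply h (2 * ⌊x⌋)
    have hxf : x = (⌊x⌋ : ℝ) := by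
      have := Int.self_sub_floor x
      rw [h0] at this; linarith
    push_cast
    linarith
  have hfh : Int.fract x ≠ 1/2 := by
    intro h0
    apply h (2 * ⌊x⌋ + 1)
    have hx : x = (⌊x⌋:ℝ) + Int.fract x := by
      have := Int.self_sub_floor x; linarith
    rw [h0] at hx
    push_cast
    linarith
  have hx : x = (⌊x⌋:ℝ) + Int.fract x := by
    have := Int.self_sub_floor x; linarith
  have hfr := Int.fract_nonneg x
  have hfr' := Int.fract_lt_one x
  have key : ⌊2*x⌋ = 2*⌊x⌋ + ⌊2 * Int.fract x⌋ := by
    conv_lhs => rw [hx]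
    rw [mul_add]
    rw [show (2:ℝ) * (⌊x⌋:ℝ) = ((2*⌊x⌋ : ℤ) : ℝ) by push_cast; ring]
    rw [Int.floor_intCast_add]
  constructor
  · intro hlt
    have h1 : (1:ℝ) < 2 * Int.fract x := by linarith
    have h2 : 2 * Int.fract x < 2 := by linarith
    have : ⌊2 * Int.fract x⌋ = 1 := by
      apply Int.floor_eq_iff.mpr
      constructor <;> push_cast <;> linarith
    rw [key, this]; exact ⟨⌊x⌋, by ring⟩
  · intro hodd
    by_contra hle
    push_neg at hle
    have hlt : Int.fract x < 1/2 := lt_of_le_of_ne hle hfh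
    have : ⌊2 * Int.fract x⌋ = 0 := by
      apply Int.floor_eq_iff.mpr
      constructor <;> push_cast <;> linarith
    rw [key, this] at hodd
    simp only [add_zero] at hodd
    exact (Int.not_odd_iff_even.mpr ⟨⌊x⌋, by ring⟩) hodd

end Aux

/-- The basic data of the model with `N = 2` inhibitory components: the constants
`λ, b, c, κ, c', a, β`, the function `Φ`, the (lifted) North-South flows `G i` generated by
the (lifted) `C²` vector fields `V i` vanishing exactly at `0` and `1/2` (mod 1), the arcs
`I_i^±` (via `δ_i^±`), and assumptions (A1)-(A2). -/
structure Base where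
  lam : ℝ
  b : ℝ
  c : ℝ
  kappa : ℕ
  c' : ℝ
  a : ℝ
  beta : ℝ
  lam_pos : 0 < lam
  b_mem : b ∈ Ioo (0:ℝ) 1
  c_mem : c ∈ Ioo (0:ℝ) 1
  kappa_pos : 0 < kappa
  c'_pos : 0 < c'
  a_pos : 0 < a
  beta_pos : 0 < beta
  /-- the feedback strength function `Φ : {0,1,2} → [0,1)` -/
  Phi : ℕ → ℝ
  Phi_zero : Phi 0 = 0
  Phi_mono : ∀ m n : ℕ, m < n → n ≤ 2 → Phi m < Phi n
  Phi_nonneg : ∀ n ≤ 2, 0 ≤ Phi n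
  Phi_lt_one : ∀ n ≤ 2, Phi n < 1
  /-- lifts of the vector fields generating the North-South flows -/
  V : Fin 2 → ℝ → ℝ
  /-- lifts of the North-South flows `g_i^t` -/
  G : Fin 2 → ℝ → ℝ → ℝ
  V_smooth : ∀ i, ContDiff ℝ 2 (V i)
  V_periodic : ∀ i x, V i (x + 1) = V i x
  V_zero_iff : ∀ i x, V i x = 0 ↔ ∃ n : ℤ, x = n ∨ x = n + 1/2
  V_deriv_zero_neg : ∀ i, deriv (V i) 0 < 0
  V_deriv_half_pos : ∀ i, 0 < deriv (V i) (1/2)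
  G_zero : ∀ i x, G i 0 x = x
  G_add : ∀ i s t x, G i (s + t) x = G i s (G i t x)
  G_periodic : ∀ i t x, G i t (x + 1) = G i t x + 1
  G_ode : ∀ i x t, HasDerivAt (fun s => G i s x) (V i (G i t x)) t
  /-- half-width of the arc `I_i^+` around the N-pole `1/2` -/
  deltaP : Fin 2 → ℝ
  /-- half-width of the arc `I_i^-` around the S-pole `0` -/
  deltaM : Fin 2 → ℝ
  deltaP_pos : ∀ i, 0 < deltaP i
  deltaM_pos : ∀ i, 0 < deltaM i
  /-- (A1), expansion part: `(g_i^t)' > e^λ` on `I_i^+` for `1-b ≤ t ≤ τ_max` -/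
  A1_exp : ∀ i, ∀ t ∈ Icc (1 - b) ((1 - b) * (1 - Phi 2)⁻¹),
    ∀ x ∈ Icc (1/2 - deltaP i) (1/2 + deltaP i), Real.exp lam < deriv (G i t) x
  /-- (A1), contraction part: `(g_i^t)' ≤ c` on `I_i^-` for `1-b ≤ t ≤ τ_max` -/
  A1_con : ∀ i, ∀ t ∈ Icc (1 - b) ((1 - b) * (1 - Phi 2)⁻¹),
    ∀ x ∈ Icc (-(deltaM i)) (deltaM i), deriv (G i t) x ≤ c
  /-- (A2): `g_i^t(I_i^+) ⊇ 𝕋 \ I_i^-` for `1-b ≤ t ≤ τ_max` -/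
  A2 : ∀ i, ∀ t ∈ Icc (1 - b) ((1 - b) * (1 - Phi 2)⁻¹),
    (coeT '' Icc (-(deltaM i)) (deltaM i))ᶜ ⊆
      (fun x => coeT (G i t x)) '' Icc (1/2 - deltaP i) (1/2 + deltaP i)

namespace Base

variable (B : Base)

/-- The maximal return time `τ_max = (1-b)(1-Φ(2))⁻¹`. -/
def tauMax : ℝ := (1 - B.b) * (1 - B.Phi 2)⁻¹

/-- The return time `τ(z₁,z₂) = (1-b)(1-Φ(#{i : z_i ∈ (1/2,1)}))⁻¹` from `Σ_b` to `Σ₀`. -/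
def tauT (z : Circ × Circ) : ℝ := (1 - B.b) * (1 - B.Phi (cnt z))⁻¹

/-- The North-South flow `g_i^t` on the circle. -/
def gT (i : Fin 2) (t : ℝ) (z : Circ) : Circ := coeT (B.G i t (rep z))

/-- The arc `I_i^+ = [1/2 - δ_i^+, 1/2 + δ_i^+] ⊆ 𝕋`. -/
def IiP (i : Fin 2) : Set Circ := coeT '' Icc (1/2 - B.deltaP i) (1/2 + B.deltaP i)

/-- The arc `I_i^- = [-δ_i^-, δ_i^-] ⊆ 𝕋`. -/
def IiM (i : Fin 2) : Set Circ := coeT '' Icc (-(B.deltaM i)) (B.deltaM i)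

/-- `d_i = dist(∂ I_i^-, ∂ g_i^{1-b}(I_i^+))`. -/
def dd (i : Fin 2) : ℝ :=
  sInf {r : ℝ | ∃ x ∈ frontier (B.IiM i),
    ∃ y ∈ frontier ((B.gT i (1 - B.b)) '' (B.IiP i)), r = dist x y}

end Base

namespace Aux

lemma periodic_int {f : ℝ → ℝ} (h : ∀ x, f (x+1) = f x) (k : ℤ) (x : ℝ) :
    f (x + k) = f x := by
  induction k using Int.induction_on with
  | zero => simp
  | succ m ih =>
      have : x + ((m:ℤ)+1 : ℤ) = (x + (m:ℤ)) + 1 := by push_cast; ring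
      rw [this, h, ih]
  | pred m ih =>
      have key := h (x + ((-(m:ℤ) - 1 : ℤ) : ℝ))
      have e1 : x + ((-(m:ℤ)-1 : ℤ) : ℝ) + 1 = x + ((-(m:ℤ) : ℤ) : ℝ) := by push_cast; ring
      rw [e1] at key
      rw [← key, ih]

lemma equivariant_int {f : ℝ → ℝ} {d : ℝ} (h : ∀ x, f (x+1) = f x + d) (k : ℤ) (x : ℝ) :
    f (x + k) = f x + k * d := by
  induction k using Int.induction_on with
  | zero => simp
  | succ m ih =>
      have : x + ((m:ℤ)+1 : ℤ) = (x + (m:ℤ)) + 1 := by push_cast; ring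
      rw [this, h, ih]; push_cast; ring
  | pred m ih =>
      have key := h (x + ((-(m:ℤ)-1 : ℤ) : ℝ))
      have e1 : x + ((-(m:ℤ)-1 : ℤ) : ℝ) + 1 = x + ((-(m:ℤ) : ℤ) : ℝ) := by push_cast; ring
      rw [e1] at key
      have e2 : f (x + ((-(m:ℤ)-1 : ℤ) : ℝ)) = f (x + ((-(m:ℤ) : ℤ) : ℝ)) - d := by linarith
      rw [e2, ih]
      push_cast; ring

/-- A continuous function whose values avoid the integers on `uIcc v w` has constant floor. -/
lemma floor_const_of_no_int {g : ℝ → ℝ} {v w : ℝ} (hc : ContinuousOn g (uIcc v w))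
    (hni : ∀ x ∈ uIcc v w, ∀ k : ℤ, g x ≠ k) : ⌊g v⌋ = ⌊g w⌋ := by
  rcases lt_trichotomy ⌊g v⌋ ⌊g w⌋ with h | h | h
  · exfalso
    have h1 : g v < (⌊g w⌋ : ℝ) := by
      have := Int.lt_floor_add_one (g v)
      have h2 : (⌊g v⌋:ℝ) + 1 ≤ (⌊g w⌋:ℝ) := by exact_mod_cast (by omega : ⌊g v⌋ + 1 ≤ ⌊g w⌋)
      linarith
    have h2 : (⌊g w⌋ : ℝ) ≤ g w := Int.floor_le _
    have hmem : ((⌊g w⌋:ℤ):ℝ) ∈ uIcc (g v) (g w) := by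
      rw [mem_uIcc]; left; exact ⟨h1.le, h2⟩
    obtain ⟨ξ, hξ, hgξ⟩ := intermediate_value_uIcc hc hmem
    exact hni ξ hξ _ hgξ
  · exact h
  · exfalso
    have h1 : g w < (⌊g v⌋ : ℝ) := by
      have := Int.lt_floor_add_one (g w)
      have h2 : (⌊g w⌋:ℝ) + 1 ≤ (⌊g v⌋:ℝ) := by exact_mod_cast (by omega : ⌊g w⌋ + 1 ≤ ⌊g v⌋)
      linarith
    have h2 : (⌊g v⌋ : ℝ) ≤ g v := Int.floor_le _
    have hmem : ((⌊g v⌋:ℤ):ℝ) ∈ uIcc (g v) (g w) := by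
      rw [mem_uIcc]; right; exact ⟨h1.le, h2⟩
    obtain ⟨ξ, hξ, hgξ⟩ := intermediate_value_uIcc hc hmem
    exact hni ξ hξ _ hgξ

end Aux

namespace Base

variable (B : Base)

lemma V_diff (i : Fin 2) : Differentiable ℝ (B.V i) :=
  (B.V_smooth i).differentiable (by norm_num)

lemma V_cont (i : Fin 2) : Continuous (B.V i) := (B.V_diff i).continuous

lemma derivV_cont (i : Fin 2) : Continuous (deriv (B.V i)) :=
  (B.V_smooth i).continuous_deriv (by norm_num)

lemma derivV_periodic (i : Fin 2) (x : ℝ) : deriv (B.V i) (x + 1) = deriv (B.V i) x := by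
  have h1 : HasDerivAt (fun y => B.V i (y + 1)) (deriv (B.V i) (x+1) * 1) x :=
    ((B.V_diff i (x+1)).hasDerivAt).comp x ((hasDerivAt_id x).add_const 1)
  have h2 : (fun y => B.V i (y + 1)) = B.V i := funext (B.V_periodic i)
  rw [h2, mul_one] at h1
  exact (h1.deriv).symm

lemma V_lipschitz (i : Fin 2) : ∃ K : NNReal, LipschitzWith K (B.V i) := by
  obtain ⟨C, hC⟩ := (isCompact_Icc (a := (0:ℝ)) (b := 1)).exists_bound_of_continuousOn
    ((B.derivV_cont i).continuousOn)
  refine ⟨⟨max C 0, le_max_right _ _⟩, lipschitzWith_of_nnnorm_deriv_le (B.V_diff i) ?_⟩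
  intro x
  show ((‖deriv (B.V i) x‖₊ : NNReal) : ℝ) ≤ max C 0
  rw [coe_nnnorm]
  have hper : deriv (B.V i) x = deriv (B.V i) (Int.fract x) := by
    have := Aux.periodic_int (f := deriv (B.V i)) (B.derivV_periodic i) ⌊x⌋ (Int.fract x)
    rw [show Int.fract x + (⌊x⌋:ℝ) = x by rw [Int.fract]; ring] at this
    exact this
  rw [hper]
  exact le_trans (hC _ ⟨Int.fract_nonneg x, (Int.fract_lt_one x).le⟩) (le_max_left _ _)

lemma G_cont_time (i : Fin 2) (x : ℝ) : Continuous (fun s => B.G i s x) := by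
  have : Differentiable ℝ (fun s => B.G i s x) := fun t => (B.G_ode i x t).differentiableAt
  exact this.continuous

lemma G_left_inv (i : Fin 2) (t x : ℝ) : B.G i (-t) (B.G i t x) = x := by
  rw [← B.G_add]; simp [B.G_zero]

lemma G_injective (i : Fin 2) (t : ℝ) : Function.Injective (B.G i t) := by
  intro x y h
  have := congrArg (B.G i (-t)) h
  rwa [B.G_left_inv, B.G_left_inv] at this

lemma G_surjective (i : Fin 2) (t : ℝ) : Function.Surjective (B.G i t) := by
  intro y
  refine ⟨B.G i (-t) y, ?_⟩
  rw [← B.G_add]; simp [B.G_zero]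

lemma G_strictMono (i : Fin 2) (t : ℝ) : StrictMono (B.G i t) := by
  intro x y hxy
  set h : ℝ → ℝ := fun s => B.G i s y - B.G i s x with hdef
  have hcont : Continuous h := (B.G_cont_time i y).sub (B.G_cont_time i x)
  have hne : ∀ s, h s ≠ 0 := by
    intro s h0
    have : B.G i s y = B.G i s x := by
      have := sub_eq_zero.mp h0; linarith
    exact absurd (B.G_injective i s this) (by intro e; exact absurd e.symm hxy.ne)
  have h0 : 0 < h 0 := by
    simp only [hdef, B.G_zero]; linarith
  by_contra hle
  push_neg at hle
  have hlt : h t < 0 := lt_of_le_of_ne (by simp only [hdef]; linarith) (hne t)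
  have hmem : (0:ℝ) ∈ uIcc (h 0) (h t) := by
    rw [mem_uIcc]; right; exact ⟨hlt.le, h0.le⟩
  obtain ⟨s, _, hs⟩ := intermediate_value_uIcc (hcont.continuousOn) hmem
  exact hne s hs

lemma G_mono (i : Fin 2) (t : ℝ) : Monotone (B.G i t) := (B.G_strictMono i t).monotone

lemma G_cont_space (i : Fin 2) (t : ℝ) : Continuous (B.G i t) := by
  rw [← StrictMono.coe_orderIsoOfSurjective (B.G i t) (B.G_strictMono i t) (B.G_surjective i t)]
  exact ((B.G_strictMono i t).orderIsoOfSurjective _ (B.G_surjective i t)).continuous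

lemma G_int_shift (i : Fin 2) (t : ℝ) (x : ℝ) (k : ℤ) :
    B.G i t (x + k) = B.G i t x + k := by
  have := Aux.equivariant_int (f := B.G i t) (d := 1) (fun y => B.G_periodic i t y) k x
  simpa using this

/-- Uniqueness of solutions of the autonomous ODE given by a Lipschitz field. -/
lemma ode_unique {Vf : ℝ → ℝ} {K : NNReal} (hl : LipschitzWith K Vf) {f g : ℝ → ℝ}
    (hf : ∀ s, HasDerivAt f (Vf (f s)) s) (hg : ∀ s, HasDerivAt g (Vf (g s)) s)
    {t₁ : ℝ} (h0 : f t₁ = g t₁) (t₂ : ℝ) : f t₂ = g t₂ := by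
  set a := min t₁ t₂ - 1
  set b := max t₁ t₂ + 1
  have ht₁ : t₁ ∈ Ioo a b := by
    constructor
    · have := min_le_left t₁ t₂; simp only [a]; linarith
    · have := le_max_left t₁ t₂; simp only [b]; linarith
  have ht₂ : t₂ ∈ Icc a b := by
    constructor
    · have := min_le_right t₁ t₂; simp only [a]; linarith
    · have := le_max_right t₁ t₂; simp only [b]; linarith
  have := ODE_solution_unique_of_mem_Icc (v := fun _ x => Vf x) (s := fun _ => univ)
    (fun _ _ => hl.lipschitzOnWith) ht₁
    ((Differentiable.continuous (fun t => (hf t).differentiableAt)).continuousOn)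
    (fun t _ => hf t) (fun _ _ => trivial)
    ((Differentiable.continuous (fun t => (hg t).differentiableAt)).continuousOn)
    (fun t _ => hg t) (fun _ _ => trivial) h0
  exact this ht₂

lemma rest_point_fixed (i : Fin 2) {z : ℝ} (hz : B.V i z = 0) (s : ℝ) : B.G i s z = z := by
  obtain ⟨K, hK⟩ := B.V_lipschitz i
  have hf : ∀ s, HasDerivAt (fun r => B.G i r z) (B.V i (B.G i s z)) s := B.G_ode i z
  have hg : ∀ s, HasDerivAt (fun _ : ℝ => z) (B.V i z) s := by
    intro s; rw [hz]; exact hasDerivAt_const s z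
  have h0 : B.G i 0 z = z := B.G_zero i z
  exact Base.ode_unique hK hf (fun s => hg s) h0 s

lemma orbit_not_rest (i : Fin 2) {x₀ : ℝ} (hV : B.V i x₀ ≠ 0) (s : ℝ) :
    B.V i (B.G i s x₀) ≠ 0 := by
  intro h0
  apply hV
  have hfix := B.rest_point_fixed i h0 (-s)
  rw [B.G_left_inv] at hfix
  rw [hfix]
  exact h0

/-- The time-`t₀` map of the flow is `C¹` near any non-rest point. -/
lemma flow_contDiffAt (i : Fin 2) {t₀ x₀ : ℝ} (ht : 0 < t₀) (hV : B.V i x₀ ≠ 0) :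
    ContDiffAt ℝ 1 (fun x => B.G i t₀ x) x₀ := by
  obtain ⟨K, hK⟩ := B.V_lipschitz i
  set Ξ : ℝ → ℝ := fun s => B.G i s x₀ with hΞdef
  have hΞ : ∀ s, HasDerivAt Ξ (B.V i (Ξ s)) s := B.G_ode i x₀
  have hΞc : Continuous Ξ := B.G_cont_time i x₀
  have hΞne : ∀ s, B.V i (Ξ s) ≠ 0 := fun s => B.orbit_not_rest i hV s
  have hΞ0 : Ξ 0 = x₀ := B.G_zero i x₀
  have hΞderiv : ∀ s, deriv Ξ s = B.V i (Ξ s) := fun s => (hΞ s).deriv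
  -- constant sign of the velocity along the orbit
  have hsign : (∀ s, 0 < B.V i (Ξ s)) ∨ (∀ s, B.V i (Ξ s) < 0) := by
    rcases lt_or_gt_of_ne (hΞne 0) with h0 | h0
    · right
      intro s
      by_contra hle
      push_neg at hle
      have hlt : 0 < B.V i (Ξ s) := lt_of_le_of_ne hle (Ne.symm (hΞne s))
      have hmem : (0:ℝ) ∈ uIcc (B.V i (Ξ 0)) (B.V i (Ξ s)) := by
        rw [mem_uIcc]; left; exact ⟨h0.le, hlt.le⟩
      obtain ⟨r, _, hr⟩ := intermediate_value_uIcc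
        (((B.V_cont i).comp hΞc).continuousOn) hmem
      exact hΞne r hr
    · left
      intro s
      by_contra hle
      push_neg at hle
      have hlt : B.V i (Ξ s) < 0 := lt_of_le_of_ne hle (hΞne s)
      have hmem : (0:ℝ) ∈ uIcc (B.V i (Ξ 0)) (B.V i (Ξ s)) := by
        rw [mem_uIcc]; right; exact ⟨hlt.le, h0.le⟩
      obtain ⟨r, _, hr⟩ := intermediate_value_uIcc
        (((B.V_cont i).comp hΞc).continuousOn) hmem
      exact hΞne r hr
  have hMono : StrictMono Ξ ∨ StrictAnti Ξ := by
    rcases hsign with h | h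
    · left; exact strictMono_of_deriv_pos (fun s => by rw [hΞderiv]; exact h s)
    · right; exact strictAnti_of_deriv_neg (fun s => by rw [hΞderiv]; exact h s)
  set m : ℝ := min (Ξ (-1)) (Ξ (t₀+1)) with hm
  set M : ℝ := max (Ξ (-1)) (Ξ (t₀+1)) with hM
  have hn1 : (-1:ℝ) < 0 := by norm_num
  have h0t : (0:ℝ) < t₀ + 1 := by linarith
  have hx0mem : x₀ ∈ Ioo m M := by
    rcases hMono with h | h
    · have h1 : Ξ (-1) < Ξ 0 := h hn1
      have h2 : Ξ 0 < Ξ (t₀+1) := h h0t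
      rw [← hΞ0]
      exact ⟨lt_of_le_of_lt (min_le_left _ _) h1, lt_of_lt_of_le h2 (le_max_right _ _)⟩
    · have h1 : Ξ 0 < Ξ (-1) := h hn1
      have h2 : Ξ (t₀+1) < Ξ 0 := h h0t
      rw [← hΞ0]
      exact ⟨lt_of_le_of_lt (min_le_right _ _) h2, lt_of_lt_of_le h1 (le_max_left _ _)⟩
  have himg : ∀ s ∈ Icc (-1:ℝ) (t₀+1), Ξ s ∈ Icc m M := by
    intro s hs
    rcases hMono with h | h
    · exact ⟨le_trans (min_le_left _ _) (h.monotone hs.1),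
        le_trans (h.monotone hs.2) (le_max_right _ _)⟩
    · exact ⟨le_trans (min_le_right _ _) (h.antitone hs.2),
        le_trans (h.antitone hs.1) (le_max_left _ _)⟩
  have hIccuIcc : Icc m M = uIcc (Ξ (-1)) (Ξ (t₀+1)) := rfl
  have hVnz : ∀ y ∈ Icc m M, B.V i y ≠ 0 := by
    intro y hy
    have : y ∈ Ξ '' uIcc (-1:ℝ) (t₀+1) := by
      apply intermediate_value_uIcc hΞc.continuousOn
      rw [← hIccuIcc]; exact hy
    obtain ⟨s, _, rfl⟩ := this
    exact hΞne s
  have hmM : m ≤ M := min_le_max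
  -- clamp and time function W
  set cl : ℝ → ℝ := fun y => max m (min y M) with hcl
  have hclcont : Continuous cl := continuous_const.max (continuous_id.min continuous_const)
  have hclmem : ∀ y, cl y ∈ Icc m M := by
    intro y
    exact ⟨le_max_left _ _, max_le hmM (min_le_right _ _)⟩
  have hclid : ∀ y ∈ Icc m M, cl y = y := by
    intro y hy
    simp only [hcl]
    rw [min_eq_left hy.2, max_eq_right hy.1]
  set gc : ℝ → ℝ := fun y => (B.V i (cl y))⁻¹ with hgc
  have hgcc : Continuous gc :=
    ((B.V_cont i).comp hclcont).inv₀ (fun y => hVnz (cl y) (hclmem y))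
  set W : ℝ → ℝ := fun x => ∫ s in x₀..x, gc s with hW
  have hWd : ∀ x, HasDerivAt W (gc x) x := fun x =>
    intervalIntegral.integral_hasDerivAt_right (hgcc.intervalIntegrable _ _)
      (hgcc.stronglyMeasurableAtFilter _ _) hgcc.continuousAt
  have hWC1 : ContDiff ℝ 1 W := by
    rw [contDiff_one_iff_deriv]
    refine ⟨fun x => (hWd x).differentiableAt, ?_⟩
    have : deriv W = gc := funext fun x => (hWd x).deriv
    rw [this]; exact hgcc
  have hW0 : W x₀ = 0 := intervalIntegral.integral_same
  -- W ∘ Ξ = id on [-1, t₀+1]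
  have hq : ∀ s ∈ Icc (-1:ℝ) (t₀+1), W (Ξ s) = s := by
    have hq' : ∀ s ∈ Icc (-1:ℝ) (t₀+1), HasDerivAt (fun r => W (Ξ r) - r) 0 s := by
      intro s hs
      have h1 : HasDerivAt (fun r => W (Ξ r)) (gc (Ξ s) * B.V i (Ξ s)) s :=
        (hWd (Ξ s)).comp s (hΞ s)
      have h2 : gc (Ξ s) * B.V i (Ξ s) = 1 := by
        simp only [hgc]
        rw [hclid _ (himg s hs)]
        exact inv_mul_cancel₀ (hΞne s)
      rw [h2] at h1
      have h3 := h1.sub (hasDerivAt_id' s)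
      rw [sub_self] at h3
      exact h3
    have hqc : Continuous (fun r => W (Ξ r) - r) :=
      ((hWC1.continuous).comp hΞc).sub continuous_id
    intro s hs
    have h0mem : (0:ℝ) ∈ Icc (-1:ℝ) (t₀+1) := ⟨by norm_num, by linarith⟩
    have hval : W (Ξ s) - s = W (Ξ 0) - 0 := by
      rcases le_or_gt 0 s with h | h
      · have := constant_of_has_deriv_right_zero (f := fun r => W (Ξ r) - r)
          (a := 0) (b := s) (hqc.continuousOn)
          (fun x hx => ((hq' x ⟨by linarith [hx.1], by linarith [hx.2, hs.2]⟩).hasDerivWithinAt))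
          s ⟨h, le_rfl⟩
        exact this
      · have := constant_of_has_deriv_right_zero (f := fun r => W (Ξ r) - r)
          (a := s) (b := 0) (hqc.continuousOn)
          (fun x hx => ((hq' x ⟨by linarith [hx.1, hs.1], by linarith [hx.2]⟩).hasDerivWithinAt))
          0 ⟨h.le, le_rfl⟩
        exact this.symm
    rw [hΞ0, hW0] at hval
    linarith
  -- the open neighbourhood O of x₀ on which the flow is conjugated to a shift
  set O : Set ℝ := Ioo (min (Ξ (-1)) (Ξ 1)) (max (Ξ (-1)) (Ξ 1)) with hO
  have h1le : (1:ℝ) ≤ t₀ + 1 := by linarith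
  have hx0O : x₀ ∈ O := by
    rcases hMono with h | h
    · have h1 : Ξ (-1) < Ξ 0 := h hn1
      have h2 : Ξ 0 < Ξ 1 := h one_pos
      rw [← hΞ0]
      exact ⟨lt_of_le_of_lt (min_le_left _ _) h1, lt_of_lt_of_le h2 (le_max_right _ _)⟩
    · have h1 : Ξ 0 < Ξ (-1) := h hn1
      have h2 : Ξ 1 < Ξ 0 := h one_pos
      rw [← hΞ0]
      exact ⟨lt_of_le_of_lt (min_le_right _ _) h2, lt_of_lt_of_le h1 (le_max_left _ _)⟩
  have hinv : ∀ x ∈ O, Ξ (W x) = x := by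
    intro x hx
    have hxmem : x ∈ uIcc (Ξ (-1)) (Ξ 1) := ⟨hx.1.le, hx.2.le⟩
    obtain ⟨s, hs, rfl⟩ := intermediate_value_uIcc hΞc.continuousOn hxmem
    have hs' : s ∈ Icc (-1:ℝ) (t₀+1) := by
      rw [uIcc_of_le (by norm_num : (-1:ℝ) ≤ 1)] at hs
      exact ⟨hs.1, le_trans hs.2 h1le⟩
    rw [hq s hs']
  -- solve the ODE: G t₀ x = Ξ (W x + t₀) on O
  have hflow : ∀ x ∈ O, B.G i t₀ x = Ξ (W x + t₀) := by
    intro x hx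
    have hf' : ∀ s, HasDerivAt (fun r => B.G i r x) (B.V i (B.G i s x)) s := B.G_ode i x
    have hg' : ∀ s : ℝ, HasDerivAt (fun r => Ξ (W x + r)) (B.V i (Ξ (W x + s))) s := by
      intro s
      have := (hΞ (W x + s)).comp s ((hasDerivAt_id' s).const_add (W x))
      rw [mul_one] at this
      exact this
    have h0 : B.G i 0 x = Ξ (W x + 0) := by
      rw [B.G_zero, add_zero, hinv x hx]
    exact Base.ode_unique hK hf' hg' h0 t₀
  -- conclude
  have hΞC1 : ContDiff ℝ 1 Ξ := by
    rw [contDiff_one_iff_deriv]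
    refine ⟨fun s => (hΞ s).differentiableAt, ?_⟩
    have : deriv Ξ = fun s => B.V i (Ξ s) := funext hΞderiv
    rw [this]
    exact (B.V_cont i).comp hΞc
  have hcomp : ContDiffAt ℝ 1 (fun x => Ξ (W x + t₀)) x₀ := by
    exact (hΞC1.contDiffAt).comp x₀ ((hWC1.contDiffAt).add contDiffAt_const)
  apply hcomp.congr_of_eventuallyEq
  exact Filter.eventuallyEq_of_mem (isOpen_Ioo.mem_nhds hx0O) hflow

end Base


/-- The full data of the model with `N = 2`: the base data together with `ε`, the lifted
rotation maps `R i` (local diffeomorphisms `r_i` of the circle of degree `deg i ≤ κ`)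
satisfying (A3)-(A4), and the base points `x0 n` of the iterated curves. -/
structure Setting extends Base where
  eps : ℝ
  eps_pos : 0 < eps
  /-- lifts of the rotation maps `r_i : 𝕋 → 𝕋` -/
  R : Fin 2 → ℝ → ℝ
  /-- the degrees of the `r_i` -/
  deg : Fin 2 → ℕ
  R_smooth : ∀ i, ContDiff ℝ 2 (R i)
  R_equiv : ∀ i x, R i (x + 1) = R i x + deg i
  deg_ge_one : ∀ i, 1 ≤ deg i
  deg_le_kappa : ∀ i, deg i ≤ toBase.kappa
  R_deriv_pos : ∀ i x, 0 < deriv (R i) x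
  /-- (A3): `r_i' > ε⁻¹` wherever `r_i ∈ [d_i, 1 - d_i]` -/
  A3 : ∀ i x, rep (coeT (R i x)) ∈ Icc (toBase.dd i) (1 - toBase.dd i) →
    eps⁻¹ < deriv (R i) x
  /-- (A4): `r_i' > c'` everywhere -/
  A4 : ∀ i x, toBase.c' < deriv (R i) x
  /-- the `x`-coordinates `x_n = π_x(γ_n(0))` determining `ι_n` -/
  x0 : ℕ → ℝ

namespace Setting

variable (S : Setting)

/-- The rotation map `r_i : 𝕋 → 𝕋`. -/
def rT (i : Fin 2) (z : Circ) : Circ := coeT (S.R i (rep z))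

/-- `ι_n(u) = β u + x_n (mod 1)`. -/
def iota (n : ℕ) (u : ℝ) : Circ := coeT (S.toBase.beta * u + S.x0 n)

/-- `Φ₁`-image of a curve: `ψ(u) = θ(u) + (r₁(ι_n(u)), r₂(ι_n(u)))`. -/
def psiOf (th : ℝ → Circ × Circ) (n : ℕ) (u : ℝ) : Circ × Circ :=
  ((th u).1 + S.rT 0 (S.iota n u), (th u).2 + S.rT 1 (S.iota n u))

/-- `Φ₂∘Φ₁`-image of a curve: `ζ(u) = (g₁^{τ(ψ(u))}(ψ¹(u)), g₂^{τ(ψ(u))}(ψ²(u)))`. -/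
def zetaOf (th : ℝ → Circ × Circ) (n : ℕ) (u : ℝ) : Circ × Circ :=
  (S.toBase.gT 0 (S.toBase.tauT (S.psiOf th n u)) (S.psiOf th n u).1,
   S.toBase.gT 1 (S.toBase.tauT (S.psiOf th n u)) (S.psiOf th n u).2)

/-- The iterated curves `θ_n`: `θ_0 ≡ (0,0)` and `θ_{n+1}(u) = ζ_n(e^{-λ} u)`. -/
def theta : ℕ → ℝ → Circ × Circ
  | 0 => fun _ => (0, 0)
  | n + 1 => fun u => S.zetaOf (theta n) n (Real.exp (-S.toBase.lam) * u)

/-- The curves `ψ_n`. -/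
def psi (n : ℕ) (u : ℝ) : Circ × Circ := S.psiOf (S.theta n) n u

/-- The curves `ζ_n`. -/
def zeta (n : ℕ) (u : ℝ) : Circ × Circ := S.zetaOf (S.theta n) n u

/-- The component `ψ_n^i`. -/
def psiI (n : ℕ) (i : Fin 2) (u : ℝ) : Circ :=
  if i = 0 then (S.psi n u).1 else (S.psi n u).2

/-- The component `ζ_n^i`. -/
def zetaI (n : ℕ) (i : Fin 2) (u : ℝ) : Circ :=
  if i = 0 then (S.zeta n u).1 else (S.zeta n u).2

/-- The length `e^{λ n} a` of the domain of the curves at step `n`. -/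
def len (n : ℕ) : ℝ := Real.exp (S.toBase.lam * n) * S.toBase.a

end Setting

lemma coeT_add (x y : ℝ) : coeT (x + y) = coeT x + coeT y := rfl
lemma coeT_sub (x y : ℝ) : coeT (x - y) = coeT x - coeT y := rfl

/-- Projection onto the `j`-th coordinate of `𝕋²`. -/
def pr (j : Fin 2) (z : Circ × Circ) : Circ := if j = 0 then z.1 else z.2

lemma cnt_le_two (z : Circ × Circ) : cnt z ≤ 2 := by
  unfold cnt; split_ifs <;> simp

namespace Setting

variable (S : Setting)

lemma pr_psiOf (th : ℝ → Circ × Circ) (n : ℕ) (j : Fin 2) (v : ℝ) :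
    pr j (S.psiOf th n v) = pr j (th v) + S.rT j (S.iota n v) := by
  fin_cases j <;> rfl

lemma pr_zetaOf (th : ℝ → Circ × Circ) (n : ℕ) (j : Fin 2) (v : ℝ) :
    pr j (S.zetaOf th n v) =
      S.toBase.gT j (S.toBase.tauT (S.psiOf th n v)) (pr j (S.psiOf th n v)) := by
  fin_cases j <;> rfl

lemma psiI_pr (n : ℕ) (i : Fin 2) (u : ℝ) :
    S.psiI n i u = pr i (S.psiOf (S.theta n) n u) := by
  fin_cases i <;> rfl

/-- The natural lift of `u ↦ r_i(ι_n(u))`. -/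
def RL (i : Fin 2) (n : ℕ) : ℝ → ℝ := fun v => S.R i (S.toBase.beta * v + S.x0 n)

lemma RL_lift (i : Fin 2) (n : ℕ) (v : ℝ) : coeT (S.RL i n v) = S.rT i (S.iota n v) := by
  unfold RL rT iota
  set y := S.toBase.beta * v + S.x0 n with hy
  have hrep : rep (coeT y) = Int.fract y := Aux.rep_coe y
  rw [hrep]
  have hshift := Aux.equivariant_int (f := S.R i) (d := (S.deg i : ℝ))
    (fun x => S.R_equiv i x) ⌊y⌋ (Int.fract y)
  rw [show Int.fract y + (⌊y⌋:ℝ) = y by rw [Int.fract]; ring] at hshift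
  rw [show S.R i (Int.fract y) = S.R i y - (⌊y⌋:ℝ) * (S.deg i) by linarith]
  have : S.R i y - (⌊y⌋:ℝ) * (S.deg i) = S.R i y + ((-(⌊y⌋ * (S.deg i)) : ℤ) : ℝ) := by
    push_cast; ring
  rw [this]
  exact (Aux.coe_add_int _ _).symm

lemma RL_hasDerivAt (i : Fin 2) (n : ℕ) (u : ℝ) :
    HasDerivAt (S.RL i n) (deriv (S.R i) (S.toBase.beta * u + S.x0 n) * S.toBase.beta) u := by
  have hR : Differentiable ℝ (S.R i) := (S.R_smooth i).differentiable (by norm_num)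
  have hlin : HasDerivAt (fun v : ℝ => S.toBase.beta * v + S.x0 n) S.toBase.beta u := by
    simpa using ((hasDerivAt_id u).const_mul S.toBase.beta).add_const (S.x0 n)
  exact ((hR _).hasDerivAt).comp u hlin

lemma RL_contDiff (i : Fin 2) (n : ℕ) : ContDiff ℝ 1 (S.RL i n) :=
  ((S.R_smooth i).of_le (by norm_num)).comp
    ((contDiff_const.mul contDiff_id).add contDiff_const)

lemma RL_strictMono (i : Fin 2) (n : ℕ) : StrictMono (S.RL i n) := by
  apply strictMono_of_deriv_pos
  intro u
  rw [(S.RL_hasDerivAt i n u).deriv]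
  have h1 : 0 < deriv (S.R i) (S.toBase.beta * u + S.x0 n) := S.R_deriv_pos i _
  exact mul_pos h1 S.toBase.beta_pos

end Setting

/-- The inductive regularity property of the curves `θ_n`: away from a locally finite
singular set, both coordinates admit monotone `C¹` local lifts on each clean interval. -/
def GoodCurve (th : ℝ → Circ × Circ) : Prop :=
  ∃ D : Set ℝ, (∀ p q : ℝ, (D ∩ Icc p q).Finite) ∧
    ∀ a b : ℝ, a < b → Ioo a b ∩ D = ∅ →
      ∀ j : Fin 2, ∃ F : ℝ → ℝ,
        (∀ v ∈ Ioo a b, coeT (F v) = pr j (th v)) ∧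
        MonotoneOn F (Icc a b) ∧ ContinuousOn F (Icc a b) ∧
        (∀ v ∈ Ioo a b, ContDiffAt ℝ 1 F v)

namespace Setting

variable (S : Setting)

lemma good_theta_zero : GoodCurve (S.theta 0) := by
  refine ⟨∅, fun p q => by simp, ?_⟩
  intro a b hab _ j
  refine ⟨fun _ => 0, ?_, monotoneOn_const, continuousOn_const, fun v _ => contDiffAt_const⟩
  intro v _
  have : pr j ((S.theta 0) v) = 0 := by fin_cases j <;> rfl
  rw [this]
  exact QuotientAddGroup.mk_zero _

lemma good_step (th : ℝ → Circ × Circ) (n : ℕ) (hth : GoodCurve th) :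
    GoodCurve (fun u => S.zetaOf th n (Real.exp (-S.toBase.lam) * u)) := by
  obtain ⟨D, hDfin, hD⟩ := hth
  set E : ℝ := Real.exp (-S.toBase.lam) with hE
  have hEpos : 0 < E := Real.exp_pos _
  set Cr : Set ℝ := {v : ℝ | ∃ j : Fin 2, ∃ k : ℤ, 2 * rep (pr j (S.psiOf th n v)) = k}
    with hCrdef
  -- lifts of ψ on clean pieces
  have piece : ∀ (a b : ℝ), a < b → Ioo a b ∩ D = ∅ → ∀ j : Fin 2,
      ∃ P : ℝ → ℝ,
        (∀ v ∈ Ioo a b, coeT (P v) = pr j (S.psiOf th n v)) ∧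
        StrictMonoOn P (Icc a b) ∧ ContinuousOn P (Icc a b) ∧
        (∀ v ∈ Ioo a b, ContDiffAt ℝ 1 P v) := by
    intro a b hab hcl j
    obtain ⟨F, hFl, hFm, hFc, hFd⟩ := hD a b hab hcl j
    refine ⟨fun v => F v + S.RL j n v, ?_, ?_, ?_, ?_⟩
    · intro v hv
      rw [S.pr_psiOf, ← hFl v hv, ← S.RL_lift j n v, coeT_add]
    · intro x hx y hy hxy
      exact add_lt_add_of_le_of_lt (hFm hx hy hxy.le) (S.RL_strictMono j n hxy)
    · exact hFc.add ((S.RL_contDiff j n).continuous.continuousOn)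
    · exact fun v hv => (hFd v hv).add ((S.RL_contDiff j n).contDiffAt)
  -- the representative of ψ via a lift
  have repP : ∀ (a b : ℝ) (P : ℝ → ℝ) (j : Fin 2),
      (∀ v ∈ Ioo a b, coeT (P v) = pr j (S.psiOf th n v)) →
      ∀ v ∈ Ioo a b, rep (pr j (S.psiOf th n v)) = Int.fract (P v) := by
    intro a b P j hPl v hv
    rw [← hPl v hv]
    exact Aux.rep_coe (P v)
  -- crossing points on a clean piece are finite
  have crfin : ∀ (a b : ℝ), a < b → Ioo a b ∩ D = ∅ → (Cr ∩ Ioo a b).Finite := by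
    intro a b hab hcl
    have hTfin : ∀ j : Fin 2,
        {v | v ∈ Ioo a b ∧ ∃ k : ℤ, 2 * rep (pr j (S.psiOf th n v)) = k}.Finite := by
      intro j
      obtain ⟨P, hPl, hPm, hPc, _⟩ := piece a b hab hcl j
      set T := {v | v ∈ Ioo a b ∧ ∃ k : ℤ, 2 * rep (pr j (S.psiOf th n v)) = k} with hT
      have hTsub : ∀ v ∈ T, ∃ k : ℤ, 2 * P v = k := by
        rintro v ⟨hv, k, hk⟩
        rw [repP a b P j hPl v hv] at hk
        refine ⟨k + 2*⌊P v⌋, ?_⟩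
        rw [Int.fract] at hk
        push_cast
        linarith
      have hmemIcc : ∀ v ∈ T, P v ∈ Icc (P a) (P b) := by
        rintro v ⟨hv, _⟩
        have hvIcc : v ∈ Icc a b := Ioo_subset_Icc_self hv
        exact ⟨hPm.monotoneOn (left_mem_Icc.mpr hab.le) hvIcc hvIcc.1,
          hPm.monotoneOn hvIcc (right_mem_Icc.mpr hab.le) hvIcc.2⟩
      have hQfin : {x : ℝ | (∃ k : ℤ, 2*x = k) ∧ x ∈ Icc (P a) (P b)}.Finite := by
        apply Set.Finite.subset
          ((Set.finite_Icc (⌈2*P a⌉) (⌊2*P b⌋)).image (fun k : ℤ => (k:ℝ)/2))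
        rintro x ⟨⟨k, hk⟩, hx⟩
        refine ⟨k, ⟨?_, ?_⟩, by linarith⟩
        · exact Int.ceil_le.mpr (by linarith [hx.1])
        · exact Int.le_floor.mpr (by linarith [hx.2])
      apply Set.Finite.of_finite_image (f := P)
      · apply hQfin.subset
        rintro _ ⟨v, hv, rfl⟩
        exact ⟨hTsub v hv, hmemIcc v hv⟩
      · exact (hPm.injOn).mono (fun v hv => Ioo_subset_Icc_self hv.1)
    apply Set.Finite.subset ((hTfin 0).union (hTfin 1))
    rintro v ⟨⟨j, hj⟩, hv⟩
    fin_cases j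
    · left; exact ⟨hv, hj⟩
    · right; exact ⟨hv, hj⟩
  -- local finiteness of D ∪ Cr
  have hDC : ∀ p q : ℝ, ((D ∪ Cr) ∩ Icc p q).Finite := by
    intro p q
    apply Aux.finite_of_locally_finite
    intro u _
    obtain ⟨ε, hε, _, hdisj⟩ := Aux.exists_Ioo_disjoint hDfin u
    refine ⟨ε, hε, ?_⟩
    have hleft : Ioo (u-ε) u ∩ D = ∅ := by
      rw [eq_empty_iff_forall_notMem]
      rintro v ⟨hv, hvD⟩
      have : v ∈ ({u} : Set ℝ) := hdisj ⟨hvD, ⟨hv.1, by linarith [hv.2]⟩⟩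
      rw [mem_singleton_iff] at this
      exact absurd this (ne_of_lt hv.2)
    have hright : Ioo u (u+ε) ∩ D = ∅ := by
      rw [eq_empty_iff_forall_notMem]
      rintro v ⟨hv, hvD⟩
      have : v ∈ ({u} : Set ℝ) := hdisj ⟨hvD, ⟨by linarith [hv.1], hv.2⟩⟩
      rw [mem_singleton_iff] at this
      exact absurd this.symm (ne_of_lt hv.1)
    have hfl := crfin (u-ε) u (by linarith) hleft
    have hfr := crfin u (u+ε) (by linarith) hright
    apply Set.Finite.subset ((hfl.union hfr).union (Set.finite_singleton u))
    rintro v ⟨hvDC, hvIoo⟩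
    rcases hvDC with hvD | hvC
    · right
      exact hdisj ⟨hvD, hvIoo⟩
    · rcases lt_trichotomy v u with h | h | h
      · left; left; exact ⟨hvC, ⟨hvIoo.1, h⟩⟩
      · right; rw [mem_singleton_iff]; exact h
      · left; right; exact ⟨hvC, ⟨h, hvIoo.2⟩⟩
  -- construct the data for θ'
  refine ⟨{u : ℝ | E * u ∈ D ∪ Cr}, ?_, ?_⟩
  · intro p q
    have hsub : {u : ℝ | E * u ∈ D ∪ Cr} ∩ Icc p q ⊆
        (fun v => v / E) '' ((D ∪ Cr) ∩ Icc (E*p) (E*q)) := by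
      rintro u ⟨hu1, hu2⟩
      refine ⟨E * u, ⟨hu1, ⟨mul_le_mul_of_nonneg_left hu2.1 hEpos.le,
        mul_le_mul_of_nonneg_left hu2.2 hEpos.le⟩⟩, ?_⟩
      field_simp
    exact Set.Finite.subset ((hDC (E*p) (E*q)).image _) hsub
  · intro a b hab hcl j
    have hab' : E * a < E * b := mul_lt_mul_of_pos_left hab hEpos
    have hmap : ∀ u, u ∈ Ioo a b ↔ E * u ∈ Ioo (E*a) (E*b) := by
      intro u
      constructor
      · rintro ⟨h1, h2⟩
        exact ⟨mul_lt_mul_of_pos_left h1 hEpos, mul_lt_mul_of_pos_left h2 hEpos⟩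
      · rintro ⟨h1, h2⟩
        exact ⟨lt_of_mul_lt_mul_left h1 hEpos.le, lt_of_mul_lt_mul_left h2 hEpos.le⟩
    have hcl' : Ioo (E*a) (E*b) ∩ (D ∪ Cr) = ∅ := by
      rw [eq_empty_iff_forall_notMem]
      rintro v ⟨hv, hvDC⟩
      have heq : E * (v / E) = v := by field_simp
      have hu : v / E ∈ Ioo a b := by
        rw [hmap, heq]; exact hv
      have : v / E ∈ Ioo a b ∩ {u | E * u ∈ D ∪ Cr} := ⟨hu, by rw [mem_setOf_eq, heq]; exact hvDC⟩
      rw [hcl] at this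
      exact this
    have hclD : Ioo (E*a) (E*b) ∩ D = ∅ := by
      rw [eq_empty_iff_forall_notMem]
      rintro v ⟨hv, hvD⟩
      have : v ∈ Ioo (E*a) (E*b) ∩ (D ∪ Cr) := ⟨hv, Or.inl hvD⟩
      rw [hcl'] at this
      exact this
    -- no crossing points in the piece
    have hnc : ∀ (P : ℝ → ℝ) (j' : Fin 2),
        (∀ v ∈ Ioo (E*a) (E*b), coeT (P v) = pr j' (S.psiOf th n v)) →
        ∀ v ∈ Ioo (E*a) (E*b), ∀ k : ℤ, 2 * P v ≠ k := by
      intro P j' hPl v hv k hk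
      have hvC : v ∈ Cr := by
        refine ⟨j', k - 2*⌊P v⌋, ?_⟩
        rw [repP _ _ P j' hPl v hv, Int.fract]
        push_cast
        linarith
      have : v ∈ Ioo (E*a) (E*b) ∩ (D ∪ Cr) := ⟨hv, Or.inr hvC⟩
      rw [hcl'] at this
      exact this
    -- constancy of cnt ∘ ψ on the piece
    have hcnt : ∀ v ∈ Ioo (E*a) (E*b), ∀ w ∈ Ioo (E*a) (E*b),
        cnt (S.psiOf th n v) = cnt (S.psiOf th n w) := by
      intro v hv w hw
      have key : ∀ j' : Fin 2, (1/2 < rep (pr j' (S.psiOf th n v)) ↔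
          1/2 < rep (pr j' (S.psiOf th n w))) := by
        intro j'
        obtain ⟨P, hPl, hPm, hPc, _⟩ := piece (E*a) (E*b) hab' hclD j'
        have huIcc : uIcc v w ⊆ Ioo (E*a) (E*b) :=
          (Set.ordConnected_Ioo).uIcc_subset hv hw
        have hfl : ⌊2 * P v⌋ = ⌊2 * P w⌋ := by
          apply Aux.floor_const_of_no_int (g := fun v => 2 * P v)
          · exact continuousOn_const.mul
              ((hPc.mono (huIcc.trans Ioo_subset_Icc_self)))
          · exact fun x hx => hnc P j' hPl x (huIcc hx)
        rw [repP _ _ P j' hPl v hv, repP _ _ P j' hPl w hw,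
          Aux.odd_floor_two_mul_iff (hnc P j' hPl v hv),
          Aux.odd_floor_two_mul_iff (hnc P j' hPl w hw), hfl]
      unfold cnt
      congr 1
      · exact if_congr (key 0) rfl rfl
      · exact if_congr (key 1) rfl rfl
    have hmid : (E*a + E*b)/2 ∈ Ioo (E*a) (E*b) := ⟨by linarith, by linarith⟩
    set t₀ := S.toBase.tauT (S.psiOf th n ((E*a + E*b)/2)) with ht₀def
    have ht₀pos : 0 < t₀ := by
      rw [ht₀def]
      unfold Base.tauT
      have h1 : 0 < 1 - S.toBase.b := by linarith [S.toBase.b_mem.2]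
      have h2 : S.toBase.Phi (cnt (S.psiOf th n ((E*a + E*b)/2))) < 1 :=
        S.toBase.Phi_lt_one _ (cnt_le_two _)
      have h3 : (0:ℝ) < 1 - S.toBase.Phi (cnt (S.psiOf th n ((E*a + E*b)/2))) := by linarith
      exact mul_pos h1 (inv_pos.mpr h3)
    have htau : ∀ v ∈ Ioo (E*a) (E*b), S.toBase.tauT (S.psiOf th n v) = t₀ := by
      intro v hv
      rw [ht₀def]
      unfold Base.tauT
      rw [hcnt v hv _ hmid]
    obtain ⟨P, hPl, hPm, hPc, hPd⟩ := piece (E*a) (E*b) hab' hclD j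
    refine ⟨fun u => S.toBase.G j t₀ (P (E * u)), ?_, ?_, ?_, ?_⟩
    · intro u hu
      have hv : E * u ∈ Ioo (E*a) (E*b) := (hmap u).mp hu
      rw [S.pr_zetaOf, htau _ hv]
      unfold Base.gT
      rw [repP _ _ P j hPl _ hv, Int.fract]
      rw [show P (E*u) - (⌊P (E*u)⌋:ℝ) = P (E*u) + ((-⌊P (E*u)⌋ : ℤ) : ℝ) by push_cast; ring]
      rw [S.toBase.G_int_shift]
      exact (Aux.coe_add_int _ _).symm
    · intro x hx y hy hxy
      have hx' : E * x ∈ Icc (E*a) (E*b) :=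
        ⟨mul_le_mul_of_nonneg_left hx.1 hEpos.le, mul_le_mul_of_nonneg_left hx.2 hEpos.le⟩
      have hy' : E * y ∈ Icc (E*a) (E*b) :=
        ⟨mul_le_mul_of_nonneg_left hy.1 hEpos.le, mul_le_mul_of_nonneg_left hy.2 hEpos.le⟩
      exact S.toBase.G_mono j t₀
        (hPm.monotoneOn hx' hy' (mul_le_mul_of_nonneg_left hxy hEpos.le))
    · apply (S.toBase.G_cont_space j t₀).comp_continuousOn
      apply hPc.comp ((continuous_const.mul continuous_id).continuousOn)
      intro x hx
      exact ⟨mul_le_mul_of_nonneg_left hx.1 hEpos.le, mul_le_mul_of_nonneg_left hx.2 hEpos.le⟩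
    · intro u hu
      have hv : E * u ∈ Ioo (E*a) (E*b) := (hmap u).mp hu
      have hVne : S.toBase.V j (P (E*u)) ≠ 0 := by
        intro h0
        obtain ⟨kk, hkk⟩ := (S.toBase.V_zero_iff j _).mp h0
        rcases hkk with h | h
        · exact hnc P j hPl _ hv (2*kk) (by rw [h]; push_cast; ring)
        · exact hnc P j hPl _ hv (2*kk+1) (by rw [h]; push_cast; ring)
      have h2 : ContDiffAt ℝ 1 (fun u : ℝ => E * u) u :=
        (contDiff_const.mul contDiff_id).contDiffAt
      have h3 : ContDiffAt ℝ 1 (fun u : ℝ => P (E * u)) u := (hPd _ hv).comp u h2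
      exact (S.toBase.flow_contDiffAt j ht₀pos hVne).comp u h3

lemma good_theta (n : ℕ) : GoodCurve (S.theta n) := by
  induction n with
  | zero => exact S.good_theta_zero
  | succ n ih => exact S.good_step (S.theta n) n ih

end Setting


namespace Setting

variable (S : Setting)

lemma main_bound (n : ℕ) (i : Fin 2) :
    ({u : ℝ | u ∈ Icc 0 (S.len n) ∧ ¬ IsC1At (S.psiI n i) u}).Finite ∧
    (∀ u ∈ Icc (0:ℝ) (S.len n), IsC1At (S.psiI n i) u →
      ∀ d : ℝ, HasCircDerivAt (S.psiI n i) d u → S.toBase.beta * S.toBase.c' ≤ d) := by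
  obtain ⟨D, hDfin, hD⟩ := S.good_theta n
  constructor
  · apply Set.Finite.subset (hDfin 0 (S.len n))
    rintro u ⟨huIcc, hnc1⟩
    refine ⟨?_, huIcc⟩
    by_contra huD
    apply hnc1
    obtain ⟨ε, hε, hε1, hdisj⟩ := Aux.exists_Ioo_disjoint hDfin u
    have hclean : Ioo (u-ε) (u+ε) ∩ D = ∅ := by
      rw [eq_empty_iff_forall_notMem]
      rintro v ⟨hv, hvD⟩
      have := hdisj ⟨hvD, hv⟩
      rw [mem_singleton_iff] at this
      subst this
      exact huD hvD
    obtain ⟨F, hFl, hFm, hFc, hFd⟩ := hD (u-ε) (u+ε) (by linarith) hclean i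
    refine ⟨fun v => F v + S.RL i n v, ε, hε, ?_, ?_⟩
    · intro v hv
      rw [S.psiI_pr, S.pr_psiOf, ← hFl v hv, ← S.RL_lift i n v, coeT_add]
    · intro v hv
      exact ((hFd v hv).add ((S.RL_contDiff i n).contDiffAt)).contDiffWithinAt
  · intro u huIcc hC1 d hder
    obtain ⟨Fψ, ε₁, hε₁, hFψl, hFψcd⟩ := hC1
    obtain ⟨F₂, hF₂ev, hF₂d⟩ := hder
    have huIoo : u ∈ Ioo (u-ε₁) (u+ε₁) := ⟨by linarith, by linarith⟩
    set T : ℝ → ℝ := fun v => Fψ v - S.RL i n v with hTdef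
    have hTl : ∀ v ∈ Ioo (u-ε₁) (u+ε₁), coeT (T v) = pr i (S.theta n v) := by
      intro v hv
      have h1 : coeT (Fψ v) = S.psiI n i v := hFψl v hv
      have h2 : S.psiI n i v = pr i (S.theta n v) + S.rT i (S.iota n v) := by
        rw [S.psiI_pr, S.pr_psiOf]
      simp only [hTdef]
      rw [coeT_sub, h1, h2, S.RL_lift]
      exact add_sub_cancel_right _ _
    have hFψcont : ContinuousOn Fψ (Ioo (u-ε₁) (u+ε₁)) := hFψcd.continuousOn
    have hTcont : ContinuousOn T (Ioo (u-ε₁) (u+ε₁)) :=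
      hFψcont.sub ((S.RL_contDiff i n).continuous.continuousOn)
    obtain ⟨ε₂, hε₂, _, hdisj⟩ := Aux.exists_Ioo_disjoint hDfin u
    set η := min ε₁ ε₂ with hηdef
    have hηpos : 0 < η := lt_min hε₁ hε₂
    have hηε₁ : η ≤ ε₁ := min_le_left _ _
    have hηε₂ : η ≤ ε₂ := min_le_right _ _
    have hηsub : Ioo (u-η) (u+η) ⊆ Ioo (u-ε₁) (u+ε₁) :=
      Ioo_subset_Ioo (by linarith) (by linarith)
    have hside : ∀ a b : ℝ, a < b → Ioo a b ⊆ Ioo (u-η) (u+η) → u ∉ Ioo a b →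
        MonotoneOn T (Ioo a b) := by
      intro a b hab hsub hu
      have hsub1 : Ioo a b ⊆ Ioo (u-ε₁) (u+ε₁) := hsub.trans hηsub
      have hclean : Ioo a b ∩ D = ∅ := by
        rw [eq_empty_iff_forall_notMem]
        rintro v ⟨hv, hvD⟩
        have hv2 : v ∈ Ioo (u-ε₂) (u+ε₂) := by
          have := hsub hv
          exact ⟨by linarith [this.1], by linarith [this.2]⟩
        have := hdisj ⟨hvD, hv2⟩
        rw [mem_singleton_iff] at this
        subst this
        exact hu hv
      obtain ⟨F, hFl, hFm, hFc, _⟩ := hD a b hab hclean i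
      have hdiffint : ∀ v ∈ Ioo a b, ∃ k : ℤ, F v - T v = k := by
        intro v hv
        have h1 : coeT (T v) = pr i (S.theta n v) := hTl v (hsub1 hv)
        have h2 : coeT (F v) = pr i (S.theta n v) := hFl v hv
        exact Aux.sub_int_of_coe_eq (h1.trans h2.symm)
      have hconst : ∀ v ∈ Ioo a b, ∀ w ∈ Ioo a b, F v - T v = F w - T w := by
        intro v hv w hw
        exact Aux.int_valued_const (Set.ordConnected_Ioo)
          ((hFc.mono Ioo_subset_Icc_self).sub (hTcont.mono hsub1)) hdiffint hv hw
      intro x hx y hy hxy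
      have h1 := hconst x hx y hy
      have hF := hFm (Ioo_subset_Icc_self hx) (Ioo_subset_Icc_self hy) hxy
      linarith
    have hleft : MonotoneOn T (Ioo (u-η) u) :=
      hside (u-η) u (by linarith) (Ioo_subset_Ioo le_rfl (by linarith))
        (fun h => lt_irrefl u h.2)
    have hright : MonotoneOn T (Ioo u (u+η)) :=
      hside u (u+η) (by linarith) (Ioo_subset_Ioo (by linarith) le_rfl)
        (fun h => lt_irrefl u h.1)
    have hTat : ContinuousAt T u := hTcont.continuousAt (isOpen_Ioo.mem_nhds huIoo)
    have hTmono : MonotoneOn T (Ioo (u-η) (u+η)) :=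
      Aux.monotoneOn_glue (by linarith) (by linarith) hTat hleft hright
    -- identify the derivative d with the derivative of the canonical lift
    have hFψu : ∀ᶠ v in 𝓝 u, coeT (F₂ v) = coeT (Fψ v) := by
      filter_upwards [hF₂ev, isOpen_Ioo.mem_nhds huIoo] with v h1 h2
      rw [h1, ← hFψl v h2]
    have hint : ∀ᶠ v in 𝓝 u, ∃ k : ℤ, F₂ v - Fψ v = k := by
      filter_upwards [hFψu] with v h
      exact Aux.sub_int_of_coe_eq h.symm
    have hδc : ContinuousAt (fun v => F₂ v - Fψ v) u :=
      (hF₂d.continuousAt).sub (hFψcont.continuousAt (isOpen_Ioo.mem_nhds huIoo))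
    obtain ⟨k₀, hk₀⟩ : ∃ k : ℤ, F₂ u - Fψ u = k := hint.self_of_nhds
    have hklocal : ∀ᶠ v in 𝓝 u, F₂ v = Fψ v + (F₂ u - Fψ u) := by
      have hball : ∀ᶠ v in 𝓝 u, |(F₂ v - Fψ v) - (F₂ u - Fψ u)| < 1/2 := by
        have hnb : Ioo ((F₂ u - Fψ u) - 1/2) ((F₂ u - Fψ u) + 1/2) ∈
            𝓝 (F₂ u - Fψ u) := isOpen_Ioo.mem_nhds ⟨by linarith, by linarith⟩
        filter_upwards [hδc.preimage_mem_nhds hnb] with v hv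
        rw [abs_lt]
        exact ⟨by linarith [hv.1], by linarith [hv.2]⟩
      filter_upwards [hball, hint] with v h1 h2
      obtain ⟨k, hk⟩ := h2
      have hzero : (k - k₀ : ℤ) = 0 := by
        apply Aux.int_eq_zero_of_abs_lt
        rw [hk, hk₀] at h1
        have : |((k:ℝ) - (k₀:ℝ))| < 1/2 := h1
        push_cast
        linarith [this, abs_nonneg ((k:ℝ) - (k₀:ℝ))]
      have : (k:ℝ) = (k₀:ℝ) := by exact_mod_cast (by omega : k = k₀)
      rw [hk₀]
      linarith [hk]
    have hFψd : HasDerivAt Fψ d u := by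
      have h1 : HasDerivAt (fun v => Fψ v + (F₂ u - Fψ u)) d u := by
        apply hF₂d.congr_of_eventuallyEq
        filter_upwards [hklocal] with v hv
        rw [hv]
      simpa using h1.sub_const (F₂ u - Fψ u)
    have hRLd := S.RL_hasDerivAt i n u
    have hTd : HasDerivAt T
        (d - deriv (S.R i) (S.toBase.beta * u + S.x0 n) * S.toBase.beta) u :=
      hFψd.sub hRLd
    have h0 : 0 ≤ d - deriv (S.R i) (S.toBase.beta * u + S.x0 n) * S.toBase.beta :=
      Aux.deriv_nonneg_of_monotoneOn hηpos hTmono hTd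
    have hA4 := S.A4 i (S.toBase.beta * u + S.x0 n)
    nlinarith [S.toBase.beta_pos]

end Setting


/- STATEMENT 11 (Lemma 4.1(i)): there is `c₁ > 0`, depending only on the base data (in
   particular independent of `n`, of the maps `r_i` and of the curves), such that for all
   `n` and `i`, the singularity set `S(ψ_n^i)` (points of `[0, e^{λn} a]` at which `ψ_n^i`
   is not `C¹`) is finite, and `(ψ_n^i)'(u) ≥ c₁` outside it. -/
theorem stmt_11 (B : Base) :
    ∃ c₁ : ℝ, 0 < c₁ ∧ ∀ S : Setting, S.toBase = B → ∀ (n : ℕ) (i : Fin 2),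
      ({u : ℝ | u ∈ Icc 0 (S.len n) ∧ ¬ IsC1At (S.psiI n i) u}).Finite ∧
      (∀ u ∈ Icc (0:ℝ) (S.len n), IsC1At (S.psiI n i) u →
        ∀ d : ℝ, HasCircDerivAt (S.psiI n i) d u → c₁ ≤ d) := by
  refine ⟨B.beta * B.c', mul_pos B.beta_pos B.c'_pos, ?_⟩
  intro S hS
  subst hS
  intro n i
  exact S.main_bound n i

end
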